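/- Let S = {s₁,…,sₙ} be a finite independent generating subset of an abelian group G, let A ⊆ G be finite, and let i, j ∈ [1,n]. If A is i-compressed, then the compression [A]_j of A along s_j is also i-compressed. -/

import Mathlib

/-- A finite subset `S` of an abelian group is independent if whenever an integral linear
combination `∑_{s ∈ S} k(s)·s` vanishes, every summand `k(s)·s` vanishes. -/
def IsIndependent {G : Type*} [AddCommGroup G] (S : Finset G) : Prop :=
  ∀ k : G → ℤ, ∑ s ∈ S, k s • s = 0 → ∀ s ∈ S, k s • s = 0

/-- The compression of a set `A` along `s` (relative to the complementary set
`T = S ∖ {s}`): in each coset `g + ⟨s⟩` with `g ∈ ⟨T⟩`, the set `A` is replaced by the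
arithmetic progression `{g, g+s, …, g+(k_g-1)s}` where `k_g = |A ∩ (g + ⟨s⟩)|`. -/
def compress {G : Type*} [AddCommGroup G] (s : G) (T : Set G) (A : Set G) : Set G :=
  ⋃ g ∈ (AddSubgroup.closure T : Set G),
    {x : G | ∃ k : ℕ, x = g + k • s ∧
      k < Nat.card {a : G // a ∈ A ∧ a - g ∈ AddSubgroup.zmultiples s}}

namespace CompressAux

variable {G : Type*} [AddCommGroup G]

/-- number of elements of `B` in the coset `g + ⟨s⟩` -/
noncomputable def Ncnt (s : G) (B : Set G) (g : G) : ℕ :=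
  Nat.card {a : G // a ∈ B ∧ a - g ∈ AddSubgroup.zmultiples s}

lemma mem_compress {s : G} {T B : Set G} {x : G} :
    x ∈ compress s T B ↔
      ∃ g ∈ AddSubgroup.closure T, ∃ k : ℕ, x = g + k • s ∧ k < Ncnt s B g := by
  simp only [compress, Set.mem_iUnion, SetLike.mem_coe, Set.mem_setOf_eq, Ncnt]
  constructor
  · rintro ⟨g, hg, k, h1, h2⟩; exact ⟨g, hg, k, h1, h2⟩
  · rintro ⟨g, hg, k, h1, h2⟩; exact ⟨g, hg, k, h1, h2⟩

lemma Ncnt_eq_ncard (s : G) (B : Set G) (g : G) :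
    Ncnt s B g = ({a : G | a ∈ B ∧ a - g ∈ AddSubgroup.zmultiples s}).ncard :=
  Nat.card_coe_set_eq _

/-- a finite downward-closed set of naturals is an initial segment -/
lemma downclosed_eq_Iio (M : Set ℕ) (hfin : M.Finite) (hdc : ∀ k, k + 1 ∈ M → k ∈ M) :
    M = Set.Iio M.ncard := by
  have hIic : ∀ k ∈ M, Set.Iic k ⊆ M := by
    intro k hk
    induction k with
    | zero =>
      intro j hj
      obtain rfl : j = 0 := Nat.le_zero.mp hj
      exact hk
    | succ n ih =>
      intro j hj
      rcases Nat.lt_or_ge j (n + 1) with h | h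
      · exact ih (hdc n hk) (Nat.lt_succ_iff.mp h)
      · obtain rfl : j = n + 1 := le_antisymm hj h
        exact hk
  have hsub : M ⊆ Set.Iio M.ncard := by
    intro k hk
    have h1 : (Set.Iic k).ncard ≤ M.ncard := Set.ncard_le_ncard (hIic k hk) hfin
    have h2 : (Set.Iic k).ncard = k + 1 := by
      rw [← Finset.coe_Iic, Set.ncard_coe_finset, Nat.card_Iic]
    exact Set.mem_Iio.mpr (by omega)
  have hIio : (Set.Iio M.ncard).ncard = M.ncard := by
    rw [← Finset.coe_range, Set.ncard_coe_finset, Finset.card_range]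
  exact Set.eq_of_subset_of_ncard_le hsub hIio.le (Set.finite_Iio _)

/-- independence: the subgroup generated by `S \ {s}` meets `⟨s⟩` trivially -/
lemma indep_disj [DecidableEq G] (S : Finset G) (hind : IsIndependent S) (s : G)
    (hs : s ∈ S) :
    ∀ x ∈ AddSubgroup.closure ((S.erase s : Finset G) : Set G),
      x ∈ AddSubgroup.zmultiples s → x = 0 := by
  intro x hx hxs
  obtain ⟨c, hc⟩ := AddSubgroup.mem_zmultiples_iff.mp hxs
  have hx' : x ∈ Submodule.span ℤ ((S.erase s : Finset G) : Set G) := by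
    rw [← Submodule.mem_toAddSubgroup, Submodule.span_int_eq_addSubgroupClosure]
    exact hx
  obtain ⟨f, -, hf⟩ := Submodule.mem_span_finset.mp hx'
  set k : G → ℤ := fun u => if u = s then -c else f u with hk
  have hks : k s = -c := by simp [hk]
  have hsum : ∑ u ∈ S, k u • u = 0 := by
    rw [← Finset.add_sum_erase _ _ hs]
    have h1 : ∑ u ∈ S.erase s, k u • u = ∑ u ∈ S.erase s, f u • u := by
      refine Finset.sum_congr rfl fun u hu => ?_
      have : u ≠ s := Finset.ne_of_mem_erase hu
      simp [hk, this]
    rw [h1, hf, hks, neg_smul, hc, neg_add_cancel]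
  have h0 := hind k hsum s hs
  rw [hks, neg_smul, neg_eq_zero, hc] at h0
  exact h0

lemma uniq_rep {T : Set G} {s : G}
    (h0 : ∀ x ∈ AddSubgroup.closure T, x ∈ AddSubgroup.zmultiples s → x = 0)
    {g g' a : G} (hg : g ∈ AddSubgroup.closure T) (hg' : g' ∈ AddSubgroup.closure T)
    (ha : a - g ∈ AddSubgroup.zmultiples s) (ha' : a - g' ∈ AddSubgroup.zmultiples s) :
    g = g' := by
  have h1 : g - g' ∈ AddSubgroup.closure T := sub_mem hg hg'
  have h2 : g - g' ∈ AddSubgroup.zmultiples s := by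
    have := sub_mem ha' ha
    have he : (a - g') - (a - g) = g - g' := by abel
    rwa [he] at this
  have := h0 _ h1 h2
  exact sub_eq_zero.mp this

lemma nsmul_mem_zmultiples (s : G) (k : ℕ) : k • s ∈ AddSubgroup.zmultiples s :=
  AddSubgroup.mem_zmultiples_iff.mpr ⟨(k : ℤ), natCast_zsmul s k⟩

/-- **Main lemma**: a set which per-coset is (an initial segment) closed downward,
has representatives in the complementary subgroup, and is finite, is fixed by
compression. -/
lemma compress_eq_self (s : G) (T : Set G) (B : Set G)
    (h0 : ∀ x ∈ AddSubgroup.closure T, x ∈ AddSubgroup.zmultiples s → x = 0)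
    (hfin : B.Finite)
    (ha : ∀ g ∈ AddSubgroup.closure T, ∀ k : ℕ,
        g + (k + 1) • s ∈ B → (k + 1) • s = 0 ∨ g + k • s ∈ B)
    (hb : ∀ x ∈ B, ∃ g ∈ AddSubgroup.closure T, ∃ k : ℕ, x = g + k • s) :
    compress s T B = B := by
  have key : ∀ g ∈ AddSubgroup.closure T,
      (∀ k : ℕ, k < Ncnt s B g → g + k • s ∈ B) ∧
      (∀ k : ℕ, g + k • s ∈ B → ∃ k' : ℕ, k' < Ncnt s B g ∧ g + k' • s = g + k • s) := by
    intro g hg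
    set D : Set G := {a : G | a ∈ B ∧ a - g ∈ AddSubgroup.zmultiples s} with hD
    have hNcD : Ncnt s B g = D.ncard := Ncnt_eq_ncard s B g
    by_cases hord : IsOfFinAddOrder s
    · -- finite order case
      set d := addOrderOf s with hdd
      have hd : 0 < d := hord.addOrderOf_pos
      have hinj : ∀ k1 k2 : ℕ, k1 < d → k2 < d → k1 • s = k2 • s → k1 = k2 := by
        have haux : ∀ k1 k2 : ℕ, k1 ≤ k2 → k2 < d → k1 • s = k2 • s → k1 = k2 := by
          intro k1 k2 hle hlt he
          by_contra hne
          have hpos : 0 < k2 - k1 := by omega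
          have : (k2 - k1) • s = 0 := by
            rw [sub_nsmul s hle, ← he]; abel
          have := addOrderOf_le_of_nsmul_eq_zero hpos this
          omega
        intro k1 k2 h1 h2 he
        rcases le_total k1 k2 with h | h
        · exact haux k1 k2 h h2 he
        · exact (haux k2 k1 h h1 he.symm).symm
      set M : Set ℕ := {k : ℕ | k < d ∧ g + k • s ∈ B} with hM
      have hMfin : M.Finite := (Set.finite_Iio d).subset fun k hk => hk.1
      have hinjOn : Set.InjOn (fun k : ℕ => g + k • s) M := by
        intro k1 h1 k2 h2 he
        exact hinj k1 k2 h1.1 h2.1 (by simpa using he)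
      have himg : D = (fun k : ℕ => g + k • s) '' M := by
        ext a
        constructor
        · rintro ⟨haB, hcos⟩
          obtain ⟨c, hc⟩ := AddSubgroup.mem_zmultiples_iff.mp hcos
          have hd0 : (d : ℤ) ≠ 0 := by exact_mod_cast hd.ne'
          set k : ℕ := (c % (d : ℤ)).toNat with hkdef
          have hcnn : 0 ≤ c % (d : ℤ) := Int.emod_nonneg c hd0
          have hclt : c % (d : ℤ) < (d : ℤ) := Int.emod_lt_of_pos c (by exact_mod_cast hd)
          have hkd : k < d := by omega
          have hks : (k : ℕ) • s = c • s := by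
            rw [← natCast_zsmul, hkdef, Int.toNat_of_nonneg hcnn, hdd]
            exact mod_addOrderOf_zsmul s c
          refine ⟨k, ⟨hkd, ?_⟩, ?_⟩
          · show g + k • s ∈ B
            rw [hks, hc]
            simpa using haB
          · show g + k • s = a
            rw [hks, hc]; abel
        · rintro ⟨k, ⟨hkd, hkB⟩, rfl⟩
          exact ⟨hkB, by simpa using nsmul_mem_zmultiples s k⟩
      have hNM : Ncnt s B g = M.ncard := by
        rw [hNcD, himg, Set.ncard_image_of_injOn hinjOn]
      have hdc : ∀ k, k + 1 ∈ M → k ∈ M := by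
        rintro k ⟨hk1, hk2⟩
        have hne : (k + 1) • s ≠ 0 :=
          nsmul_ne_zero_of_lt_addOrderOf (Nat.succ_ne_zero k) hk1
        rcases ha g hg k hk2 with h | h
        · exact absurd h hne
        · exact ⟨by omega, h⟩
      have hMeq : M = Set.Iio M.ncard := downclosed_eq_Iio M hMfin hdc
      constructor
      · intro k hk
        have : k ∈ M := by rw [hMeq]; rw [hNM] at hk; exact hk
        exact this.2
      · intro k hk
        refine ⟨k % d, ?_, ?_⟩
        · have : k % d ∈ M := ⟨Nat.mod_lt _ hd, by rw [hdd, mod_addOrderOf_nsmul]; exact hk⟩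
          rw [hMeq] at this
          rw [hNM]
          exact this
        · rw [hdd, mod_addOrderOf_nsmul]
    · -- infinite order case
      have hinj : Function.Injective (fun k : ℕ => g + k • s) := by
        have haux : ∀ k1 k2 : ℕ, k1 ≤ k2 → k1 • s = k2 • s → k1 = k2 := by
          intro k1 k2 hle he
          by_contra hne
          have hpos : 0 < k2 - k1 := by omega
          have hz : (k2 - k1) • s = 0 := by
            rw [sub_nsmul s hle, ← he]; abel
          exact hord (isOfFinAddOrder_iff_nsmul_eq_zero.mpr ⟨k2 - k1, hpos, hz⟩)
        intro k1 k2 he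
        simp only [add_right_inj] at he
        rcases le_total k1 k2 with h | h
        · exact haux k1 k2 h he
        · exact (haux k2 k1 h he.symm).symm
      set M : Set ℕ := {k : ℕ | g + k • s ∈ B} with hM
      have hMfin : M.Finite := by
        have : M = (fun k : ℕ => g + k • s) ⁻¹' B := rfl
        rw [this]
        exact Set.Finite.preimage hinj.injOn hfin
      have himg : D = (fun k : ℕ => g + k • s) '' M := by
        ext a
        constructor
        · rintro ⟨haB, hcos⟩
          obtain ⟨g2, hg2, k, hk⟩ := hb a haB
          have hg2g : g2 = g := by
            refine uniq_rep h0 hg2 hg ?_ hcos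
            rw [hk]; simpa using nsmul_mem_zmultiples s k
          refine ⟨k, ?_, ?_⟩
          · show g + k • s ∈ B
            rw [← hg2g, ← hk]; exact haB
          · show g + k • s = a
            rw [hk, hg2g]
        · rintro ⟨k, hkB, rfl⟩
          exact ⟨hkB, by simpa using nsmul_mem_zmultiples s k⟩
      have hNM : Ncnt s B g = M.ncard := by
        rw [hNcD, himg, Set.ncard_image_of_injOn hinj.injOn]
      have hdc : ∀ k, k + 1 ∈ M → k ∈ M := by
        intro k hk
        rcases ha g hg k hk with h | h
        · exact absurd (isOfFinAddOrder_iff_nsmul_eq_zero.mpr ⟨k + 1, Nat.succ_pos k, h⟩) hord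
        · exact h
      have hMeq : M = Set.Iio M.ncard := downclosed_eq_Iio M hMfin hdc
      constructor
      · intro k hk
        have : k ∈ M := by rw [hMeq]; rw [hNM] at hk; exact hk
        exact this
      · intro k hk
        refine ⟨k, ?_, rfl⟩
        have : k ∈ M := hk
        rw [hMeq] at this
        rw [hNM]
        exact this
  ext x
  constructor
  · intro hx
    obtain ⟨g, hg, k, rfl, hk⟩ := mem_compress.mp hx
    exact (key g hg).1 k hk
  · intro hx
    obtain ⟨g, hg, k, rfl⟩ := hb x hx
    obtain ⟨k', hk', he⟩ := (key g hg).2 k hx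
    exact mem_compress.mpr ⟨g, hg, k', he.symm, hk'⟩

end CompressAux

open CompressAux

/-- **Claim 2.1.** Let `S` be a finite independent generating subset of an abelian group
`G`, let `A ⊆ G` be finite, and let `sᵢ, sⱼ ∈ S`. If `A` is `i`-compressed (i.e.
`[A]_i = A`), then so is the compression `[A]_j` of `A` along `sⱼ`. -/
theorem compress_preserves_compressed {G : Type*} [AddCommGroup G] [DecidableEq G]
    (S : Finset G) (hind : IsIndependent S)
    (hgen : AddSubgroup.closure (S : Set G) = ⊤)
    (A : Finset G) (si sj : G) (hi : si ∈ S) (hj : sj ∈ S)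
    (hAi : compress si (↑(S.erase si)) (↑A : Set G) = (↑A : Set G)) :
    compress si (↑(S.erase si)) (compress sj (↑(S.erase sj)) (↑A : Set G))
      = compress sj (↑(S.erase sj)) (↑A : Set G) := by
  by_cases hij : si = sj
  · subst hij
    rw [hAi]
    exact hAi
  have h0i := indep_disj S hind si hi
  have h0j := indep_disj S hind sj hj
  have hsjCi : sj ∈ AddSubgroup.closure (↑(S.erase si) : Set G) :=
    AddSubgroup.subset_closure (Finset.mem_coe.mpr (Finset.mem_erase.mpr ⟨Ne.symm hij, hj⟩))
  have hsiCj : si ∈ AddSubgroup.closure (↑(S.erase sj) : Set G) :=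
    AddSubgroup.subset_closure (Finset.mem_coe.mpr (Finset.mem_erase.mpr ⟨hij, hi⟩))
  have hAmem : ∀ a : G, a ∈ (↑A : Set G) →
      ∃ g ∈ AddSubgroup.closure (↑(S.erase si) : Set G),
        ∃ m : ℕ, a = g + m • si ∧ m < Ncnt si (↑A : Set G) g := by
    intro a ha
    rw [← hAi] at ha
    exact mem_compress.mp ha
  -- the key step property of A along si
  have stepA : ∀ g ∈ AddSubgroup.closure (↑(S.erase si) : Set G), ∀ k : ℕ,
      (k + 1) • si ≠ 0 → g + (k + 1) • si ∈ (↑A : Set G) → g + k • si ∈ (↑A : Set G) := by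
    intro g hg k hne hmem
    obtain ⟨g0, hg0, m, heq, hm⟩ := hAmem _ hmem
    have hgg : g0 = g := by
      refine uniq_rep h0i hg0 hg (a := g + (k + 1) • si) ?_ ?_
      · rw [heq]
        simpa using nsmul_mem_zmultiples si m
      · simpa using nsmul_mem_zmultiples si (k + 1)
    rw [hgg] at heq hm
    have hms : m • si = (k + 1) • si := (add_left_cancel heq).symm
    have hm0 : m ≠ 0 := by
      rintro rfl
      simp only [zero_smul] at hms
      exact hne hms.symm
    obtain ⟨m', rfl⟩ := Nat.exists_eq_succ_of_ne_zero hm0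
    have hsm : g + k • si = g + m' • si := by
      have h1 : m' • si + si = k • si + si := by
        rw [← succ_nsmul, ← succ_nsmul]
        exact hms
      rw [add_right_cancel h1]
    rw [← hAi]
    exact mem_compress.mpr ⟨g, hg, m', hsm, Nat.lt_of_succ_lt hm⟩
  set B := compress sj (↑(S.erase sj)) (↑A : Set G) with hBdef
  -- representatives for B
  have hbB : ∀ x ∈ B, ∃ g ∈ AddSubgroup.closure (↑(S.erase si) : Set G),
      ∃ k : ℕ, x = g + k • si := by
    intro x hx
    obtain ⟨g, hg, b, hxe, hbN⟩ := mem_compress.mp hx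
    have hpos : 0 < Ncnt sj (↑A : Set G) g := lt_of_le_of_lt (Nat.zero_le b) hbN
    obtain ⟨⟨a, haA, hacos⟩⟩ := (Nat.card_pos_iff.mp hpos).1
    obtain ⟨c, hc⟩ := AddSubgroup.mem_zmultiples_iff.mp hacos
    obtain ⟨g2, hg2, m, ham, _⟩ := hAmem a haA
    refine ⟨g2 + ((b : ℤ) - c) • sj,
      add_mem hg2 (AddSubgroup.zsmul_mem _ hsjCi _), m, ?_⟩
    have hgeq : g = a - c • sj := by rw [hc]; abel
    rw [hxe, hgeq, ham, sub_zsmul, natCast_zsmul]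
    abel
  -- downward step property for B
  have haB : ∀ g' ∈ AddSubgroup.closure (↑(S.erase si) : Set G), ∀ k : ℕ,
      g' + (k + 1) • si ∈ B → (k + 1) • si = 0 ∨ g' + k • si ∈ B := by
    intro g' hg' k hxB
    by_cases hzero : (k + 1) • si = 0
    · exact Or.inl hzero
    right
    obtain ⟨g, hg, b, hxe, hbN⟩ := mem_compress.mp hxB
    have hkey : ∀ p : {a : G // a ∈ (↑A : Set G) ∧ a - g ∈ AddSubgroup.zmultiples sj},
        (p.1 - si) ∈ (↑A : Set G) ∧
          (p.1 - si) - (g - si) ∈ AddSubgroup.zmultiples sj := by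
      rintro ⟨a, haA, hacos⟩
      obtain ⟨c, hc⟩ := AddSubgroup.mem_zmultiples_iff.mp hacos
      have hp1 : a = (g' + (c - (b : ℤ)) • sj) + (k + 1) • si := by
        have hgv : g = g' + (k + 1) • si - b • sj := by rw [hxe]; abel
        have hpv : a = g + c • sj := by rw [hc]; abel
        rw [hpv, hgv, sub_zsmul, natCast_zsmul]
        abel
      constructor
      · have hmem0 : (g' + (c - (b : ℤ)) • sj) + (k + 1) • si ∈ (↑A : Set G) := by
          rw [← hp1]; exact haA
        have hstep := stepA _ (add_mem hg' (AddSubgroup.zsmul_mem _ hsjCi _)) k hzero hmem0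
        have hrw : a - si = (g' + (c - (b : ℤ)) • sj) + k • si := by
          rw [hp1, succ_nsmul]; abel
        rw [hrw]
        exact hstep
      · have hrw : (a - si) - (g - si) = a - g := by abel
        rw [hrw]
        exact hacos
    have hfin2 : Finite {a : G // a ∈ (↑A : Set G) ∧
        a - (g - si) ∈ AddSubgroup.zmultiples sj} := by
      have hf : {a : G | a ∈ (↑A : Set G) ∧
          a - (g - si) ∈ AddSubgroup.zmultiples sj}.Finite :=
        A.finite_toSet.subset fun a ha => ha.1
      exact hf.to_subtype
    have hmono : Ncnt sj (↑A : Set G) g ≤ Ncnt sj (↑A : Set G) (g - si) := by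
      refine Nat.card_le_card_of_injective (fun p => ⟨p.1 - si, hkey p⟩) ?_
      intro p q hpq
      have h1 : p.1 - si = q.1 - si := congrArg Subtype.val hpq
      exact Subtype.ext (by have := sub_left_injective h1; exact this)
    refine mem_compress.mpr ⟨g - si, sub_mem hg hsiCj, b, ?_,
      lt_of_lt_of_le hbN hmono⟩
    calc g' + k • si = g' + (k + 1) • si - si := by rw [succ_nsmul]; abel
      _ = g + b • sj - si := by rw [hxe]
      _ = (g - si) + b • sj := by abel
  -- finiteness of B
  have hfinB : B.Finite := by
    have hbig : (⋃ a ∈ (↑A : Set G), ⋃ b ∈ Set.Iio A.card,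
        {x : G | ∃ g ∈ AddSubgroup.closure (↑(S.erase sj) : Set G),
          a - g ∈ AddSubgroup.zmultiples sj ∧ x = g + b • sj}).Finite := by
      refine Set.Finite.biUnion A.finite_toSet fun a _ => ?_
      refine Set.Finite.biUnion (Set.finite_Iio _) fun b _ => ?_
      apply Set.Subsingleton.finite
      rintro x1 ⟨g1, hg1, hd1, he1⟩ x2 ⟨g2, hg2, hd2, he2⟩
      have hgeq : g1 = g2 := uniq_rep h0j hg1 hg2 hd1 hd2
      rw [he1, he2, hgeq]
    refine hbig.subset ?_
    intro x hx
    obtain ⟨g, hg, b, hxe, hbN⟩ := mem_compress.mp hx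
    have hpos : 0 < Ncnt sj (↑A : Set G) g := lt_of_le_of_lt (Nat.zero_le b) hbN
    obtain ⟨⟨a, haA, hacos⟩⟩ := (Nat.card_pos_iff.mp hpos).1
    have hble : Ncnt sj (↑A : Set G) g ≤ A.card := by
      rw [Ncnt_eq_ncard]
      calc ({a : G | a ∈ (↑A : Set G) ∧ a - g ∈ AddSubgroup.zmultiples sj}).ncard
          ≤ (↑A : Set G).ncard := Set.ncard_le_ncard (fun u hu => hu.1) A.finite_toSet
        _ = A.card := Set.ncard_coe_finset A
    simp only [Set.mem_iUnion, Set.mem_setOf_eq, Set.mem_Iio, exists_prop]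
    exact ⟨a, haA, b, lt_of_lt_of_le hbN hble, g, hg, hacos, hxe⟩
  exact compress_eq_self si _ B h0i hfinB haB hbB
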